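/- arXiv:1809.07313 — 2 statements merged into one kernel-verified Lean document; each statement's English description precedes it below -/
import Mathlib

section
/- For every finite simple graph G with at least one vertex and every natural number k, the independence number of the pebble configuration graph satisfies α(G[k]) ≤ C(k + θ(G) − 1, θ(G) − 1), where θ(G) is the clique cover number of G and C(·,·) denotes the binomial coefficient. -/
open Finset

/-- A configuration of `k` identical pebbles on the vertex set `V`. -/
def Config (V : Type*) [Fintype V] (k : ℕ) : Type _ :=
  {f : V → ℕ // ∑ v, f v = k}

/-- The pebble configuration graph `G[k]`: two distinct configurations are adjacent
iff there is a transport `m` moving each pebble along an edge of `G` or keeping it in place. -/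
def PebbleGraph {V : Type*} [Fintype V] (G : SimpleGraph V) (k : ℕ) :
    SimpleGraph (Config V k) where
  Adj f g := f ≠ g ∧ ∃ m : V → V → ℕ,
    (∀ u w, m u w ≠ 0 → u = w ∨ G.Adj u w) ∧
    (∀ u, ∑ w, m u w = f.1 u) ∧ (∀ u, ∑ w, m w u = g.1 u)
  symm := ⟨by
    rintro f g ⟨hne, m, h1, h2, h3⟩
    exact ⟨hne.symm, fun u w => m w u,
      fun u w h => (h1 w u h).imp Eq.symm fun h => h.symm, h3, h2⟩⟩
  loopless := ⟨fun f h => h.1 rfl⟩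

/-- The independence number of a graph: the supremum of sizes of finite sets of
pairwise non-adjacent vertices. -/
noncomputable def indepNum {W : Type*} (G : SimpleGraph W) : ℕ :=
  sSup {n | ∃ s : Finset W, (↑s : Set W).Pairwise (fun a b => ¬ G.Adj a b) ∧ s.card = n}

/-- The 5-cycle on vertices `Fin 5`, with `u` adjacent to `u + 1` (mod 5). -/
def C5 : SimpleGraph (Fin 5) where
  Adj u w := u ≠ w ∧ (w = u + 1 ∨ u = w + 1)
  symm := ⟨fun _ _ h => ⟨h.1.symm, h.2.symm⟩⟩
  loopless := ⟨fun _ h => h.1 rfl⟩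

/-- The clique cover number of a graph: the least `n` such that the vertex set can be
covered by `n` cliques. -/
noncomputable def cliqueCoverNum {V : Type*} [Fintype V] (G : SimpleGraph V) : ℕ :=
  sInf {n | ∃ P : Fin n → Set V, (∀ i, G.IsClique (P i)) ∧ ∀ v, ∃ i, v ∈ P i}


/-- Transport lemma: if `f` and `g` have the same total, there is a matrix with row sums `f`,
column sums `g`, supported on pairs where both `f` and `g` are nonzero. -/
lemma exists_transport {α : Type*} [Fintype α] [DecidableEq α] :
    ∀ (N : ℕ) (f g : α → ℕ), ∑ v, f v = N → ∑ v, g v = N →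
    ∃ m : α → α → ℕ, (∀ u, ∑ w, m u w = f u) ∧ (∀ u, ∑ w, m w u = g u) ∧
      (∀ u w, m u w ≠ 0 → f u ≠ 0 ∧ g w ≠ 0)
  | 0, f, g, hf, hg => by
    refine ⟨fun _ _ => 0, fun u => ?_, fun u => ?_, fun u w h => absurd rfl h⟩
    · rw [Finset.sum_const_zero]
      exact (Finset.sum_eq_zero_iff.mp hf u (mem_univ u)).symm
    · rw [Finset.sum_const_zero]
      exact (Finset.sum_eq_zero_iff.mp hg u (mem_univ u)).symm
  | N + 1, f, g, hf, hg => by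
    have hfu : ∃ u₀, f u₀ ≠ 0 := by
      by_contra h
      push_neg at h
      simp [h] at hf
    have hgw : ∃ w₀, g w₀ ≠ 0 := by
      by_contra h
      push_neg at h
      simp [h] at hg
    obtain ⟨u₀, hu₀⟩ := hfu
    obtain ⟨w₀, hw₀⟩ := hgw
    set f' : α → ℕ := Function.update f u₀ (f u₀ - 1) with hf'def
    set g' : α → ℕ := Function.update g w₀ (g w₀ - 1) with hg'def
    have hf' : ∑ v, f' v = N := by
      rw [hf'def, Finset.sum_update_of_mem (mem_univ u₀), Finset.sdiff_singleton_eq_erase]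
      have := Finset.add_sum_erase univ f (mem_univ u₀)
      omega
    have hg' : ∑ v, g' v = N := by
      rw [hg'def, Finset.sum_update_of_mem (mem_univ w₀), Finset.sdiff_singleton_eq_erase]
      have := Finset.add_sum_erase univ g (mem_univ w₀)
      omega
    obtain ⟨m', hr, hc, hs⟩ := exists_transport N f' g' hf' hg'
    refine ⟨fun u w => m' u w + if u = u₀ ∧ w = w₀ then 1 else 0, fun u => ?_, fun u => ?_,
      fun u w h => ?_⟩
    · rw [Finset.sum_add_distrib, hr]
      by_cases hu : u = u₀
      · have h1 : (∑ w, if u = u₀ ∧ w = w₀ then 1 else 0) = 1 := by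
          simp [hu, Finset.filter_eq']
        have h2 : f' u = f u - 1 := by rw [hu]; simp [hf'def]
        have h3 : f u = f u₀ := by rw [hu]
        omega
      · have h1 : (∑ w, if u = u₀ ∧ w = w₀ then 1 else 0) = 0 := by
          simp [hu]
        have h2 : f' u = f u := by simp [hf'def, Function.update_of_ne hu]
        omega
    · rw [Finset.sum_add_distrib, hc]
      by_cases hw : u = w₀
      · have h1 : (∑ w, if w = u₀ ∧ u = w₀ then 1 else 0) = 1 := by
          simp [hw, Finset.filter_eq']
        have h2 : g' u = g u - 1 := by rw [hw]; simp [hg'def]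
        have h3 : g u = g w₀ := by rw [hw]
        omega
      · have h1 : (∑ w, if w = u₀ ∧ u = w₀ then 1 else 0) = 0 := by
          simp [hw]
        have h2 : g' u = g u := by simp [hg'def, Function.update_of_ne hw]
        omega
    · by_cases hm : m' u w ≠ 0
      · obtain ⟨h1, h2⟩ := hs u w hm
        constructor
        · by_cases hu : u = u₀
          · rw [hu]; exact hu₀
          · rwa [hf'def, Function.update_of_ne hu] at h1
        · by_cases hw : w = w₀
          · rw [hw]; exact hw₀
          · rwa [hg'def, Function.update_of_ne hw] at h2
      · push_neg at hm
        have h' : (if u = u₀ ∧ w = w₀ then 1 else 0) ≠ 0 := by simpa [hm] using h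
        have huw : u = u₀ ∧ w = w₀ := by by_contra hc'; simp [hc'] at h'
        rw [huw.1, huw.2]
        exact ⟨hu₀, hw₀⟩

/-- For every finite simple graph `G` with at least one vertex and every `k`,
`α(G[k]) ≤ C(k + θ(G) − 1, θ(G) − 1)` where `θ(G)` is the clique cover number. -/
theorem alpha_pebble_le_choose {V : Type*} [Fintype V] [Nonempty V]
    (G : SimpleGraph V) (k : ℕ) :
    indepNum (PebbleGraph G k) ≤
      (k + cliqueCoverNum G - 1).choose (cliqueCoverNum G - 1) := by
  classical
  set n := cliqueCoverNum G with hn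
  have hne : {m | ∃ P : Fin m → Set V, (∀ i, G.IsClique (P i)) ∧ ∀ v, ∃ i, v ∈ P i}.Nonempty := by
    refine ⟨Fintype.card V, fun i => {(Fintype.equivFin V).symm i}, fun i => ?_, fun v => ?_⟩
    · intro a ha b hb hab
      simp only [Set.mem_singleton_iff] at ha hb
      exact absurd (ha.trans hb.symm) hab
    · exact ⟨Fintype.equivFin V v, by simp⟩
  obtain ⟨P, hcliq, hcover⟩ : n ∈ _ := Nat.sInf_mem hne
  have hn1 : 1 ≤ n := by
    obtain ⟨i, _⟩ := hcover (Classical.arbitrary V)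
    exact Nat.one_le_iff_ne_zero.mpr fun h => (h ▸ i).elim0
  choose c hc using hcover
  have hadj : ∀ u w : V, u ≠ w → c u = c w → G.Adj u w := fun u w hne' hcw =>
    hcliq (c u) (hc u) (hcw ▸ hc w) hne'
  -- the map to clique-count multisets
  let Ψ : Config V k → Sym (Fin n) k := fun f =>
    ⟨∑ v, Multiset.replicate (f.1 v) (c v), by
      have h : ∀ s : Finset V,
          Multiset.card (∑ v ∈ s, Multiset.replicate (f.1 v) (c v)) = ∑ v ∈ s, f.1 v := by
        intro s
        induction s using Finset.induction with
        | empty => simp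
        | insert _ _ h ih => simp [Finset.sum_insert h, ih]
      rw [h univ, f.2]⟩
  -- counts formula
  have hcount : ∀ (f : Config V k) (i : Fin n),
      Multiset.count i (Ψ f).1 = ∑ v, if i = c v then f.1 v else 0 := by
    intro f i
    rw [Multiset.count_sum']
    exact Finset.sum_congr rfl fun v _ => by rw [Multiset.count_replicate]; exact if_congr eq_comm rfl rfl
  -- same counts + distinct implies adjacent
  have hkey : ∀ f g : Config V k, f ≠ g → Ψ f = Ψ g → (PebbleGraph G k).Adj f g := by
    intro f g hfg hΨ
    refine ⟨hfg, ?_⟩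
    have hsum : ∀ i : Fin n,
        (∑ v, if i = c v then f.1 v else 0) = ∑ v, if i = c v then g.1 v else 0 := by
      intro i
      rw [← hcount f i, ← hcount g i, hΨ]
    have hM : ∀ i : Fin n, ∃ m : V → V → ℕ,
        (∀ u, ∑ w, m u w = (if i = c u then f.1 u else 0)) ∧
        (∀ u, ∑ w, m w u = (if i = c u then g.1 u else 0)) ∧
        (∀ u w, m u w ≠ 0 → (if i = c u then f.1 u else 0) ≠ 0 ∧
          (if i = c w then g.1 w else 0) ≠ 0) := fun i =>
      exists_transport (∑ v, if i = c v then f.1 v else 0) _ _ rfl (hsum i).symm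
    choose M hrow hcol hsupp using hM
    refine ⟨fun u w => ∑ i, M i u w, fun u w h => ?_, fun u => ?_, fun u => ?_⟩
    · obtain ⟨i, hi⟩ : ∃ i, M i u w ≠ 0 := by
        by_contra hall
        push_neg at hall
        exact h (Finset.sum_eq_zero fun i _ => hall i)
      obtain ⟨h1, h2⟩ := hsupp i u w hi
      have hcu : i = c u := by by_contra h'; simp [h'] at h1
      have hcw : i = c w := by by_contra h'; simp [h'] at h2
      by_cases huw : u = w
      · exact Or.inl huw
      · exact Or.inr (hadj u w huw (hcu ▸ hcw))
    · rw [Finset.sum_comm]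
      calc ∑ i, ∑ w, M i u w = ∑ i, if i = c u then f.1 u else 0 :=
            Finset.sum_congr rfl fun i _ => hrow i u
        _ = f.1 u := by rw [Finset.sum_ite_eq']; simp
    · rw [Finset.sum_comm]
      calc ∑ i, ∑ w, M i w u = ∑ i, if i = c u then g.1 u else 0 :=
            Finset.sum_congr rfl fun i _ => hcol i u
        _ = g.1 u := by rw [Finset.sum_ite_eq']; simp
  -- bound every independent set
  refine csSup_le' ?_
  rintro x ⟨s, hpair, rfl⟩
  have hinj : Set.InjOn Ψ ↑s := by
    intro a ha b hb hab
    by_contra hne'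
    exact hpair ha hb hne' (hkey a b hne' hab)
  have hcard : s.card ≤ Fintype.card (Sym (Fin n) k) := by
    rw [← Finset.card_univ]
    exact Finset.card_le_card_of_injOn Ψ (fun _ _ => Finset.mem_univ _) hinj
  have hsym : Fintype.card (Sym (Fin n) k) = (n + k - 1).choose k := by
    rw [Sym.card_sym_eq_choose, Fintype.card_fin]
  have hchoose : (k + n - 1).choose (n - 1) = (n + k - 1).choose k := by
    have h1 : (k + n - 1) - k = n - 1 := by omega
    have h2 : k ≤ k + n - 1 := by omega
    rw [← h1, Nat.choose_symm h2]
    congr 1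
    omega
  rw [hchoose]
  omega
end

section
/- Let C₅ be the 5-cycle with vertices v₁,…,v₅ and edges e_j = {v_j, v_{j+1}} (indices mod 5), let k be a natural number, and for each j let S_j be the set of edge configurations ψ of weight k with ψ(e_{j−1}) = ψ(e_{j+1}) = 0 (indices mod 5). Then for every vertex configuration f of weight k and every j ∈ {1,…,5}, the number of edge configurations in S_j adjacent to f equals f(v_{j+3}) + 1 (index mod 5); consequently Σ_{j=1}^{5} #{ψ ∈ S_j : ψ adjacent to f} = k + 5. -/
open Finset

/-- An edge configuration `ψ` (pebbles on the edges `e₀, …, e₄` of the 5-cycle, where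
`e_j = {v_j, v_{j+1}}`) is adjacent to a vertex configuration `f` if every pebble of `f`
can be moved to an adjacent edge so as to produce `ψ`. -/
def VEAdj (k : ℕ) (f ψ : Config (Fin 5) k) : Prop :=
  ∃ m : Fin 5 → Fin 5 → ℕ,
    (∀ v e, m v e ≠ 0 → v = e ∨ v = e + 1) ∧
    (∀ v, ∑ e, m v e = f.1 v) ∧
    (∀ e, ∑ v, m v e = ψ.1 e)


private lemma fin5cases : ∀ e j : Fin 5,
    e = j ∨ e = j + 1 ∨ e = j + 2 ∨ e = j + 3 ∨ e = j + 4 := by decide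

private lemma dAll : ∀ j : Fin 5,
    j + 1 ≠ j ∧ j ≠ j + 1 ∧ j + 2 ≠ j ∧ j ≠ j + 2 ∧ j + 3 ≠ j ∧ j ≠ j + 3 ∧
    j + 4 ≠ j ∧ j ≠ j + 4 ∧ j + 2 ≠ j + 1 ∧ j + 1 ≠ j + 2 ∧ j + 3 ≠ j + 1 ∧
    j + 1 ≠ j + 3 ∧ j + 4 ≠ j + 1 ∧ j + 1 ≠ j + 4 ∧ j + 3 ≠ j + 2 ∧ j + 2 ≠ j + 3 ∧
    j + 4 ≠ j + 2 ∧ j + 2 ≠ j + 4 ∧ j + 4 ≠ j + 3 ∧ j + 3 ≠ j + 4 := by decide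

private lemma a14 : ∀ j : Fin 5, j + 1 + 4 = j := by decide
private lemma a24 : ∀ j : Fin 5, j + 2 + 4 = j + 1 := by decide
private lemma a34 : ∀ j : Fin 5, j + 3 + 4 = j + 2 := by decide
private lemma a44 : ∀ j : Fin 5, j + 4 + 4 = j + 3 := by decide
private lemma b1 : ∀ j : Fin 5, j + 1 + 1 = j + 2 := by decide
private lemma b2 : ∀ j : Fin 5, j + 2 + 1 = j + 3 := by decide
private lemma b3 : ∀ j : Fin 5, j + 3 + 1 = j + 4 := by decide
private lemma b4 : ∀ j : Fin 5, j + 4 + 1 = j := by decide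
private lemma hj1 : ∀ j : Fin 5, j - 1 = j + 4 := by decide

private lemma rowsum (m : Fin 5 → Fin 5 → ℕ)
    (hz : ∀ v e : Fin 5, ¬(v = e ∨ v = e + 1) → m v e = 0) (v : Fin 5) :
    ∑ e, m v e = m v v + m v (v + 4) := by
  have h5 : v = 0 ∨ v = 1 ∨ v = 2 ∨ v = 3 ∨ v = 4 := by omega
  rw [Fin.sum_univ_five]
  rcases h5 with rfl|rfl|rfl|rfl|rfl <;>
    · simp [hz 0 1, hz 0 2, hz 0 3, hz 1 2, hz 1 3, hz 1 4, hz 2 0, hz 2 3, hz 2 4,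
        hz 3 0, hz 3 1, hz 3 4, hz 4 0, hz 4 1, hz 4 2, show (0:Fin 5)+4=4 from rfl]
      try omega

private lemma colsum (m : Fin 5 → Fin 5 → ℕ)
    (hz : ∀ v e : Fin 5, ¬(v = e ∨ v = e + 1) → m v e = 0) (e : Fin 5) :
    ∑ v, m v e = m e e + m (e + 1) e := by
  have h5 : e = 0 ∨ e = 1 ∨ e = 2 ∨ e = 3 ∨ e = 4 := by omega
  rw [Fin.sum_univ_five]
  rcases h5 with rfl|rfl|rfl|rfl|rfl <;>
    · simp [hz 0 1, hz 0 2, hz 0 3, hz 1 2, hz 1 3, hz 1 4, hz 2 0, hz 2 3, hz 2 4,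
        hz 3 0, hz 3 1, hz 3 4, hz 4 0, hz 4 1, hz 4 2]
      try omega

private def Faux (A : Fin 5 → ℕ) (j : Fin 5) (a : ℕ) : Fin 5 → ℕ := fun e =>
  if e = j then A j + A (j + 1)
  else if e = j + 2 then A (j + 2) + a
  else if e = j + 3 then A (j + 4) + (A (j + 3) - a)
  else 0

private lemma sumFaux (A : Fin 5 → ℕ) (j : Fin 5) (a : ℕ) (ha : a ≤ A (j + 3)) :
    ∑ e, Faux A j a e = ∑ v, A v := by
  have h5 : j = 0 ∨ j = 1 ∨ j = 2 ∨ j = 3 ∨ j = 4 := by omega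
  rw [Fin.sum_univ_five, Fin.sum_univ_five]
  rcases h5 with rfl|rfl|rfl|rfl|rfl <;>
    · simp only [Faux] at ha ⊢
      simp at ha ⊢
      omega

private def Psi (k : ℕ) (f : Config (Fin 5) k) (j : Fin 5) (a : ℕ) : Config (Fin 5) k :=
  ⟨Faux f.1 j (min a (f.1 (j + 3))), by
    rw [sumFaux _ _ _ (min_le_right _ _)]; exact f.2⟩

private def Maux (A : Fin 5 → ℕ) (j : Fin 5) (a : ℕ) : Fin 5 → Fin 5 → ℕ := fun v e =>
  if v = j ∧ e = j then A j
  else if v = j + 1 ∧ e = j then A (j + 1)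
  else if v = j + 2 ∧ e = j + 2 then A (j + 2)
  else if v = j + 3 ∧ e = j + 2 then a
  else if v = j + 3 ∧ e = j + 3 then A (j + 3) - a
  else if v = j + 4 ∧ e = j + 3 then A (j + 4)
  else 0

private lemma key (k : ℕ) (f : Config (Fin 5) k) (j : Fin 5) :
    {ψ : Config (Fin 5) k | ψ.1 (j - 1) = 0 ∧ ψ.1 (j + 1) = 0 ∧ VEAdj k f ψ}.ncard =
      f.1 (j + 3) + 1 := by
  have hset : {ψ : Config (Fin 5) k | ψ.1 (j - 1) = 0 ∧ ψ.1 (j + 1) = 0 ∧ VEAdj k f ψ}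
      = Psi k f j '' Set.Iic (f.1 (j + 3)) := by
    ext ψ
    simp only [Set.mem_setOf_eq, Set.mem_image, Set.mem_Iic]
    constructor
    · rintro ⟨h1, h2, m, hm0, hm1, hm2⟩
      have hz : ∀ v e : Fin 5, ¬(v = e ∨ v = e + 1) → m v e = 0 := by
        intro v e h; by_contra hne; exact h (hm0 v e hne)
      have R0 : m j j + m j (j + 4) = f.1 j := by
        rw [← rowsum m hz j]; exact hm1 j
      have R1 : m (j+1) (j+1) + m (j+1) j = f.1 (j+1) := by
        have h := rowsum m hz (j+1); rw [a14 j] at h; rw [← h]; exact hm1 _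
      have R2 : m (j+2) (j+2) + m (j+2) (j+1) = f.1 (j+2) := by
        have h := rowsum m hz (j+2); rw [a24 j] at h; rw [← h]; exact hm1 _
      have R3 : m (j+3) (j+3) + m (j+3) (j+2) = f.1 (j+3) := by
        have h := rowsum m hz (j+3); rw [a34 j] at h; rw [← h]; exact hm1 _
      have R4 : m (j+4) (j+4) + m (j+4) (j+3) = f.1 (j+4) := by
        have h := rowsum m hz (j+4); rw [a44 j] at h; rw [← h]; exact hm1 _
      have C0 : m j j + m (j+1) j = ψ.1 j := by
        rw [← colsum m hz j]; exact hm2 j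
      have C1 : m (j+1) (j+1) + m (j+2) (j+1) = ψ.1 (j+1) := by
        have h := colsum m hz (j+1); rw [b1 j] at h; rw [← h]; exact hm2 _
      have C2 : m (j+2) (j+2) + m (j+3) (j+2) = ψ.1 (j+2) := by
        have h := colsum m hz (j+2); rw [b2 j] at h; rw [← h]; exact hm2 _
      have C3 : m (j+3) (j+3) + m (j+4) (j+3) = ψ.1 (j+3) := by
        have h := colsum m hz (j+3); rw [b3 j] at h; rw [← h]; exact hm2 _
      have C4 : m (j+4) (j+4) + m j (j+4) = ψ.1 (j+4) := by
        have h := colsum m hz (j+4); rw [b4 j] at h; rw [← h]; exact hm2 _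
      rw [hj1 j] at h1
      refine ⟨m (j+3) (j+2), by omega, ?_⟩
      have hmin : min (m (j+3) (j+2)) (f.1 (j+3)) = m (j+3) (j+2) := min_eq_left (by omega)
      apply Subtype.ext
      show Faux f.1 j (min (m (j+3) (j+2)) (f.1 (j+3))) = ψ.1
      rw [hmin]
      funext e
      rcases fin5cases e j with rfl|rfl|rfl|rfl|rfl <;>
        · simp [Faux, dAll]
          omega
    · rintro ⟨a, ha, rfl⟩
      have hmin : min a (f.1 (j + 3)) = a := min_eq_left ha
      have hPsi : (Psi k f j a).1 = Faux f.1 j a := by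
        show Faux f.1 j (min a (f.1 (j+3))) = Faux f.1 j a
        rw [hmin]
      have hz : ∀ v e : Fin 5, ¬(v = e ∨ v = e + 1) → Maux f.1 j a v e = 0 := by
        intro v e h
        simp only [Maux]
        split_ifs with h1 h2 h3 h4 h5 h6
        · exact absurd (Or.inl (h1.1.trans h1.2.symm)) h
        · exact absurd (Or.inr (h2.1.trans (by rw [h2.2]))) h
        · exact absurd (Or.inl (h3.1.trans h3.2.symm)) h
        · exact absurd (Or.inr (by rw [h4.1, h4.2, b2 j])) h
        · exact absurd (Or.inl (h5.1.trans h5.2.symm)) h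
        · exact absurd (Or.inr (by rw [h6.1, h6.2, b3 j])) h
        · rfl
      refine ⟨?_, ?_, ?_⟩
      · rw [hj1 j, hPsi]; simp [Faux, dAll]
      · rw [hPsi]; simp [Faux, dAll]
      · refine ⟨Maux f.1 j a, ?_, ?_, ?_⟩
        · intro v e h
          by_contra hc
          exact h (hz v e hc)
        · intro v
          rw [rowsum _ hz]
          rcases fin5cases v j with rfl|rfl|rfl|rfl|rfl <;>
            · simp [Maux, dAll, a14, a24, a34, a44]
              try omega
        · intro e
          rw [colsum _ hz, hPsi]
          rcases fin5cases e j with rfl|rfl|rfl|rfl|rfl <;>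
            · simp [Maux, Faux, dAll, b1, b2, b3, b4]
              try omega
  rw [hset, Set.ncard_image_of_injOn, ← Finset.coe_Iic, Set.ncard_coe_finset, Nat.card_Iic]
  intro a ha b hb h
  have hc := congrFun (congrArg Subtype.val h) (j + 2)
  simp only [Psi, Faux, dAll] at hc
  simp only [Set.mem_Iic] at ha hb
  simp [dAll] at hc
  omega

/-- For each `j`, the number of edge configurations vanishing on `e_{j−1}` and `e_{j+1}`
that are adjacent to a given vertex configuration `f` of weight `k` equals
`f(v_{j+3}) + 1`; consequently, summing over `j` gives `k + 5`. -/
theorem card_edgeConfigs_adj (k : ℕ) (f : Config (Fin 5) k) :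
    (∀ j : Fin 5,
      {ψ : Config (Fin 5) k | ψ.1 (j - 1) = 0 ∧ ψ.1 (j + 1) = 0 ∧ VEAdj k f ψ}.ncard =
        f.1 (j + 3) + 1) ∧
    ∑ j : Fin 5,
      {ψ : Config (Fin 5) k | ψ.1 (j - 1) = 0 ∧ ψ.1 (j + 1) = 0 ∧ VEAdj k f ψ}.ncard =
        k + 5 := by
  refine ⟨fun j => key k f j, ?_⟩
  simp only [fun j => key k f j]
  rw [Fin.sum_univ_five]
  have hk := f.2
  rw [Fin.sum_univ_five] at hk
  simp only [show (0:Fin 5)+3 = 3 from rfl, show (1:Fin 5)+3 = 4 from rfl,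
    show (2:Fin 5)+3 = 0 from rfl, show (3:Fin 5)+3 = 1 from rfl,
    show (4:Fin 5)+3 = 2 from rfl]
  omega
end
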